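/- Let T be a random variable with |T| ≤ ζ a.s. where 0 < ζ < 1/2, E[T] = 0, and E[T²] = exp(c/n) − 1 for some c > 0 and n ∈ ℕ large enough that exp(c/n) − 1 ≤ 2c/n, exp(c/n) − 1 − c/n ≤ 2c²/n², and 3(1 − ζ) ≥ 1. Then |E[log(1 + T)] + c/(2n)| ≤ 2cζ/n + c²/n². -/

import Mathlib

open MeasureTheory ProbabilityTheory Real

section Aux

lemma fderiv_aux (t : ℝ) (ht : -1 < t) :
    HasDerivAt (fun y => Real.log (1+y) - y + y^2/2) (t^2/(1+t)) t := by
  have h0 : (1:ℝ) + t ≠ 0 := by linarith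
  have hlog : HasDerivAt (fun y : ℝ => Real.log (1+y)) (1/(1+t)) t := by
    have := (Real.hasDerivAt_log h0).comp t ((hasDerivAt_id t).const_add 1)
    simpa [Function.comp_def] using this
  have hsq : HasDerivAt (fun y : ℝ => y^2/2) t t := by
    have := ((hasDerivAt_pow 2 t).div_const 2)
    simpa using this
  have := (hlog.sub (hasDerivAt_id t)).add hsq
  refine this.congr_deriv ?_
  field_simp
  ring

lemma taylor_bd {ζ x : ℝ} (hζ0 : 0 < ζ) (hζ : ζ < 1/2) (hx : |x| ≤ ζ) :
    |Real.log (1+x) - x + x^2/2| ≤ x^2 * ζ / (3*(1-ζ)) := by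
  have h1ζ : (0:ℝ) < 1 - ζ := by linarith
  obtain ⟨hxl, hxr⟩ := abs_le.mp hx
  set f : ℝ → ℝ := fun y => Real.log (1+y) - y + y^2/2 with hf
  set g : ℝ → ℝ := fun y => f y - y^3/(3*(1-ζ)) with hg
  have hcont : ContinuousOn f (Set.Icc (-ζ) ζ) := by
    intro y hy
    have hy1 : -1 < y := by have := hy.1; simp at this ⊢; linarith
    exact ((fderiv_aux y hy1).continuousAt).continuousWithinAt
  have hmono : MonotoneOn f (Set.Icc (-ζ) ζ) := by
    apply monotoneOn_of_hasDerivWithinAt_nonneg (f' := fun t => t^2/(1+t))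
      (convex_Icc _ _) hcont
    · intro t ht
      rw [interior_Icc] at ht
      have ht1 : -1 < t := by have := ht.1; linarith
      exact (fderiv_aux t ht1).hasDerivWithinAt
    · intro t ht
      rw [interior_Icc] at ht
      have ht1 : (0:ℝ) < 1 + t := by have := ht.1; linarith
      positivity
  have hanti : AntitoneOn g (Set.Icc (-ζ) ζ) := by
    apply antitoneOn_of_hasDerivWithinAt_nonpos (f' := fun t => t^2/(1+t) - t^2/(1-ζ))
      (convex_Icc _ _)
    · exact hcont.sub ((continuousOn_pow 3).div_const _)
    · intro t ht
      rw [interior_Icc] at ht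
      have ht1 : -1 < t := by have := ht.1; linarith
      have : HasDerivAt (fun y : ℝ => y^3/(3*(1-ζ))) (t^2/(1-ζ)) t := by
        have := (hasDerivAt_pow 3 t).div_const (3*(1-ζ))
        refine this.congr_deriv ?_
        field_simp
        ring
      exact ((fderiv_aux t ht1).sub this).hasDerivWithinAt
    · intro t ht
      rw [interior_Icc] at ht
      have ht2 : 1 - ζ ≤ 1 + t := by have := ht.1; linarith
      have ht3 : (0:ℝ) < 1 + t := by linarith
      have : t^2/(1+t) ≤ t^2/(1-ζ) := by
        apply div_le_div_of_nonneg_left (by positivity) h1ζ ht2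
      linarith
  have hmem : x ∈ Set.Icc (-ζ) ζ := ⟨hxl, hxr⟩
  have h0mem : (0:ℝ) ∈ Set.Icc (-ζ) ζ := ⟨by linarith, by linarith⟩
  have hf0 : f 0 = 0 := by simp [hf]
  have hg0 : g 0 = 0 := by simp [hg, hf0]
  rcases le_or_gt 0 x with hx0 | hx0
  · have hfx : 0 ≤ f x := hf0 ▸ hmono h0mem hmem hx0
    have hgx : g x ≤ 0 := hg0 ▸ hanti h0mem hmem hx0
    have : f x ≤ x^3/(3*(1-ζ)) := by simpa [hg, sub_nonpos] using hgx
    rw [abs_of_nonneg hfx]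
    calc f x ≤ x^3/(3*(1-ζ)) := this
      _ = x^2 * x / (3*(1-ζ)) := by ring
      _ ≤ x^2 * ζ / (3*(1-ζ)) := by
          apply div_le_div_of_nonneg_right ?_ (by linarith)
          nlinarith
  · have hfx : f x ≤ 0 := hf0 ▸ hmono hmem h0mem hx0.le
    have hgx : 0 ≤ g x := hg0 ▸ hanti hmem h0mem hx0.le
    have hlow : x^3/(3*(1-ζ)) ≤ f x := by simpa [hg, sub_nonneg] using hgx
    rw [abs_of_nonpos hfx]
    calc -f x ≤ -(x^3/(3*(1-ζ))) := by linarith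
      _ = x^2 * (-x) / (3*(1-ζ)) := by ring
      _ ≤ x^2 * ζ / (3*(1-ζ)) := by
          apply div_le_div_of_nonneg_right ?_ (by linarith)
          nlinarith

end Aux

theorem stmt4 {Ω : Type*} {mΩ : MeasurableSpace Ω} (μ : Measure Ω) [IsProbabilityMeasure μ]
    (T : Ω → ℝ) (hTm : Measurable T)
    (c : ℝ) (hc : 0 < c) (n : ℕ) (hn : 0 < n)
    (ζ : ℝ) (hζ0 : 0 < ζ) (hζ : ζ < 1/2)
    (hbound : ∀ᵐ ω ∂μ, |T ω| ≤ ζ)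
    (hmean : ∫ ω, T ω ∂μ = 0)
    (hvar : ∫ ω, (T ω)^2 ∂μ = Real.exp (c / n) - 1)
    (h1 : Real.exp (c / n) - 1 ≤ 2 * c / n)
    (h2 : Real.exp (c / n) - 1 - c / n ≤ 2 * c^2 / n^2)
    (h3 : 1 ≤ 3 * (1 - ζ)) :
    |(∫ ω, Real.log (1 + T ω) ∂μ) + c / (2 * n)| ≤ 2 * c * ζ / n + c^2 / n^2 := by
  have hn' : (0:ℝ) < (n:ℝ) := by exact_mod_cast hn
  -- pointwise remainder bound
  have hptw : ∀ᵐ ω ∂μ, |Real.log (1 + T ω) - T ω + (T ω)^2/2| ≤ ζ * (T ω)^2 := by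
    filter_upwards [hbound] with ω h
    have hb := taylor_bd hζ0 hζ h
    have hle : (T ω)^2 * ζ / (3*(1-ζ)) ≤ ζ * (T ω)^2 := by
      rw [div_le_iff₀ (by linarith)]
      nlinarith [mul_nonneg (mul_nonneg hζ0.le (sq_nonneg (T ω)))
        (by linarith : (0:ℝ) ≤ 3*(1-ζ)-1)]
    linarith
  -- integrability
  have intT : Integrable T μ := by
    apply Integrable.mono' (integrable_const ζ) hTm.aestronglyMeasurable
    filter_upwards [hbound] with ω h using by simpa using h
  have intT2 : Integrable (fun ω => (T ω)^2) μ := by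
    apply Integrable.mono' (integrable_const (ζ^2)) ((hTm.pow_const 2).aestronglyMeasurable)
    filter_upwards [hbound] with ω h
    rw [Real.norm_eq_abs, abs_pow]
    exact pow_le_pow_left₀ (abs_nonneg _) h 2
  have hT2bd : ∀ᵐ ω ∂μ, (T ω)^2 ≤ ζ^2 := by
    filter_upwards [hbound] with ω h
    calc (T ω)^2 = |T ω|^2 := (sq_abs _).symm
      _ ≤ ζ^2 := pow_le_pow_left₀ (abs_nonneg _) h 2
  have intlog : Integrable (fun ω => Real.log (1 + T ω)) μ := by
    apply Integrable.mono' (integrable_const (ζ + ζ^2/2 + ζ*ζ^2))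
      ((measurable_const.add hTm).log.aestronglyMeasurable)
    filter_upwards [hbound, hptw, hT2bd] with ω h hp h2'
    have habs := abs_le.mp h
    have hps := abs_le.mp hp
    show ‖Real.log (1 + T ω)‖ ≤ _
    rw [Real.norm_eq_abs, abs_le]
    constructor <;> nlinarith [sq_nonneg (T ω)]
  set R : Ω → ℝ := fun ω => Real.log (1 + T ω) - T ω + (T ω)^2/2 with hR
  have intR : Integrable R μ := (intlog.sub intT).add (intT2.div_const 2)
  -- bound on ∫ R
  have hIRabs : |∫ ω, R ω ∂μ| ≤ ζ * (Real.exp (c/n) - 1) := by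
    calc |∫ ω, R ω ∂μ| = ‖∫ ω, R ω ∂μ‖ := (Real.norm_eq_abs _).symm
      _ ≤ ∫ ω, ‖R ω‖ ∂μ := norm_integral_le_integral_norm _
      _ = ∫ ω, |R ω| ∂μ := by simp [Real.norm_eq_abs]
      _ ≤ ∫ ω, ζ * (T ω)^2 ∂μ := integral_mono_ae intR.abs (intT2.const_mul ζ) hptw
      _ = ζ * (Real.exp (c/n) - 1) := by rw [integral_const_mul, hvar]
  -- split the integral
  have intTsub : Integrable (fun ω => T ω - (T ω)^2/2) μ := intT.sub (intT2.div_const 2)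
  have hsplit : ∫ ω, Real.log (1 + T ω) ∂μ
      = (∫ ω, T ω ∂μ) - (∫ ω, (T ω)^2 ∂μ)/2 + ∫ ω, R ω ∂μ := by
    have heq : (fun ω => Real.log (1 + T ω)) = fun ω => (T ω - (T ω)^2/2) + R ω := by
      funext ω; simp only [hR]; ring
    rw [heq, integral_add intTsub intR, integral_sub intT (intT2.div_const 2), integral_div]
  rw [hsplit, hmean, hvar]
  have hIR := abs_le.mp hIRabs
  have hmul : ζ * (Real.exp (c/n) - 1) ≤ ζ * (2*c/n) := mul_le_mul_of_nonneg_left h1 hζ0.le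
  have hexp : 0 ≤ Real.exp (c/(n:ℝ)) - 1 - c/n := by
    nlinarith [Real.add_one_le_exp (c/(n:ℝ))]
  have e1 : 2*c*ζ/(n:ℝ) = ζ*(2*c/(n:ℝ)) := by ring
  have e3 : c/(2*(n:ℝ)) = (c/(n:ℝ))/2 := by ring
  have e4 : 2*c/(n:ℝ) = 2*(c/(n:ℝ)) := by ring
  have e5 : 2*c^2/(n:ℝ)^2 = 2*(c^2/(n:ℝ)^2) := by ring
  have hq : 0 ≤ c^2/(n:ℝ)^2 := by positivity
  rw [abs_le]
  constructor <;> linarith [hIR.1, hIR.2]
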